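/- Let φ be a 3-CNF formula with variables x_1,…,x_n and clauses C_1,…,C_m, where each clause consists of three literals on three pairwise distinct variables. The SAT game associated with φ admits a connected Nash stable partition if and only if φ is satisfiable, i.e., there exists α : {1,…,n} → {true,false} satisfying every clause of φ. -/

import Mathlib

/-- A partition of the finite vertex set `V`, represented by the function sending each
vertex to its part. -/
structure ASHGPart (V : Type*) [DecidableEq V] where
  part : V → Finset V
  mem_part : ∀ v, v ∈ part v
  eq_of_mem : ∀ u v, u ∈ part v → part u = part v

/-- Nash stability for a general hedonic game given by utility functions `u v S`
(the utility of `v` in a coalition `S` containing `v`). -/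
def HGNashStable {V : Type*} [DecidableEq V] (u : V → Finset V → ℤ) (π : ASHGPart V) : Prop :=
  ∀ v : V, u v {v} ≤ u v (π.part v) ∧
    ∀ x : V, π.part x ≠ π.part v → u v (insert v (π.part x)) ≤ u v (π.part v)

/-- The vertex set of the SAT game: the center `s`, literal vertices `lit i true = xᵢ`
and `lit i false = x̄ᵢ`, and clause vertices. -/
inductive SATV (n m : ℕ) where
  | center : SATV n m
  | lit : Fin n → Bool → SATV n m
  | clause : Fin m → SATV n m
  deriving DecidableEq, Fintype

/-- The star with center `s` and all other vertices as leaves. -/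
def starG (n m : ℕ) : SimpleGraph (SATV n m) where
  Adj u v := u ≠ v ∧ (u = SATV.center ∨ v = SATV.center)
  symm := ⟨fun u v h => ⟨h.1.symm, h.2.symm⟩⟩
  loopless := ⟨fun v h => h.1 rfl⟩

/-- Clause `j` (with variables `vars j` and polarities `sgn j`, where `sgn j p = true`
means the `p`-th literal is positive) is witnessed by the coalition `S`: there is a truth
assignment `α` to its three variables satisfying the clause such that, for each of the
three variables, the literal vertex matching its value is in `S` and the opposite literal
vertex is not. -/
def Witness {n m : ℕ} (vars : Fin m → Fin 3 → Fin n) (sgn : Fin m → Fin 3 → Bool)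
    (S : Finset (SATV n m)) (j : Fin m) : Prop :=
  ∃ α : Fin 3 → Bool, (∃ p : Fin 3, α p = sgn j p) ∧
    ∀ p : Fin 3, SATV.lit (vars j p) (α p) ∈ S ∧ SATV.lit (vars j p) (!(α p)) ∉ S

instance {n m : ℕ} (vars : Fin m → Fin 3 → Fin n) (sgn : Fin m → Fin 3 → Bool)
    (S : Finset (SATV n m)) (j : Fin m) : Decidable (Witness vars sgn S j) := by
  unfold Witness; infer_instance

/-- The utilities of the SAT game. -/
def satUtil {n m : ℕ} (vars : Fin m → Fin 3 → Fin n) (sgn : Fin m → Fin 3 → Bool) :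
    SATV n m → Finset (SATV n m) → ℤ
  | .clause _, S => if SATV.center ∈ S then 1 else 0
  | .lit _ _, _ => 0
  | .center, S =>
      ((Finset.univ.filter fun j : Fin m => Witness vars sgn S j).card : ℤ)
      - ((Finset.univ.filter fun i : Fin n =>
            SATV.lit i true ∈ S ∧ SATV.lit i false ∈ S).card : ℤ)
      - ((Finset.univ.filter fun j : Fin m => SATV.clause j ∈ S).card : ℤ)


section Aux

variable {n m : ℕ}

/-- The big coalition: center, all "true" literals, all clauses. -/
def bigS (n m : ℕ) (α : Fin n → Bool) : Finset (SATV n m) :=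
  insert SATV.center ((Finset.univ.image fun i => SATV.lit i (α i)) ∪
    Finset.univ.image SATV.clause)

lemma center_mem_bigS (α : Fin n → Bool) : SATV.center ∈ bigS n m α := by
  simp [bigS]

lemma clause_mem_bigS (α : Fin n → Bool) (j : Fin m) : SATV.clause j ∈ bigS n m α := by
  simp [bigS]

lemma lit_mem_bigS (α : Fin n → Bool) (i : Fin n) (b : Bool) :
    SATV.lit i b ∈ bigS n m α ↔ b = α i := by
  simp only [bigS, Finset.mem_insert, Finset.mem_union, Finset.mem_image,
    Finset.mem_univ, true_and]
  constructor
  · rintro (h | ⟨i', hi'⟩ | ⟨j', hj'⟩)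
    · exact absurd h (by simp)
    · rw [SATV.lit.injEq] at hi'
      obtain ⟨rfl, rfl⟩ := hi'; rfl
    · exact absurd hj' (by simp)
  · rintro rfl
    exact Or.inr (Or.inl ⟨i, rfl⟩)

lemma notS_lit (α : Fin n → Bool) {x : SATV n m} (hx : x ∉ bigS n m α) :
    ∃ i b, x = SATV.lit i b := by
  cases x with
  | center => exact absurd (center_mem_bigS α) hx
  | clause j => exact absurd (clause_mem_bigS α j) hx
  | lit i b => exact ⟨i, b, rfl⟩

/-- The partition: the big coalition plus singletons. -/
def satPart (n m : ℕ) (α : Fin n → Bool) : ASHGPart (SATV n m) where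
  part v := if v ∈ bigS n m α then bigS n m α else {v}
  mem_part v := by split <;> simp_all
  eq_of_mem u v h := by
    by_cases hv : v ∈ bigS n m α
    · rw [if_pos hv] at h ⊢; rw [if_pos h]
    · rw [if_neg hv] at h ⊢
      rw [Finset.mem_singleton] at h
      subst h; rw [if_neg hv]

lemma no_witness_of_few_lits (vars : Fin m → Fin 3 → Fin n) (sgn : Fin m → Fin 3 → Bool)
    (hinj : ∀ j : Fin m, Function.Injective (vars j))
    (T : Finset (SATV n m)) (i : Fin n) (b : Bool)
    (hT : ∀ i' b', SATV.lit i' b' ∈ T → i' = i) (j : Fin m) :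
    ¬ Witness vars sgn T j := by
  rintro ⟨β, -, hβ⟩
  have h0 := hT _ _ (hβ 0).1
  have h1 := hT _ _ (hβ 1).1
  have : (0 : Fin 3) = 1 := hinj j (h0.trans h1.symm)
  exact absurd this (by decide)

lemma conn_of_center_mem (T : Finset (SATV n m)) (hT : SATV.center ∈ T) :
    ((starG n m).induce (↑T : Set (SATV n m))).Connected := by
  rw [SimpleGraph.connected_iff]
  refine ⟨?_, ⟨⟨SATV.center, hT⟩⟩⟩
  have key : ∀ a : (↑T : Set (SATV n m)),
      ((starG n m).induce (↑T : Set (SATV n m))).Reachable a ⟨SATV.center, hT⟩ := by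
    rintro ⟨a, ha⟩
    by_cases h : a = SATV.center
    · subst h; exact SimpleGraph.Reachable.refl _
    · exact SimpleGraph.Adj.reachable (by exact (⟨h, Or.inr rfl⟩ : (starG n m).Adj a SATV.center))
  intro a b
  exact (key a).trans (key b).symm

lemma conn_singleton (v : SATV n m) :
    ((starG n m).induce (↑({v} : Finset (SATV n m)) : Set (SATV n m))).Connected := by
  rw [SimpleGraph.connected_iff]
  refine ⟨?_, ⟨⟨v, by simp⟩⟩⟩
  rintro ⟨a, ha⟩ ⟨b, hb⟩
  have : (⟨a, ha⟩ : (↑({v} : Finset (SATV n m)) : Set (SATV n m))) = ⟨b, hb⟩ := by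
    apply Subtype.ext
    have ha' : a = v := by simpa using ha
    have hb' : b = v := by simpa using hb
    simp only [ha', hb']
  rw [this]


lemma util_center_le_zero (vars : Fin m → Fin 3 → Fin n) (sgn : Fin m → Fin 3 → Bool)
    (T : Finset (SATV n m)) (h : ∀ j : Fin m, ¬ Witness vars sgn T j) :
    satUtil vars sgn SATV.center T ≤ 0 := by
  have eW : (Finset.univ.filter fun j : Fin m => Witness vars sgn T j) = ∅ := by
    rw [Finset.filter_eq_empty_iff]; exact fun j _ => h j
  simp only [satUtil, eW, Finset.card_empty, Nat.cast_zero]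
  have h1 : (0:ℤ) ≤ ((Finset.univ.filter fun i : Fin n =>
      SATV.lit i true ∈ T ∧ SATV.lit i false ∈ T).card : ℤ) := Nat.cast_nonneg _
  have h2 : (0:ℤ) ≤ ((Finset.univ.filter fun j : Fin m => SATV.clause j ∈ T).card : ℤ) :=
    Nat.cast_nonneg _
  omega

lemma util_center_singleton (vars : Fin m → Fin 3 → Fin n) (sgn : Fin m → Fin 3 → Bool) :
    satUtil vars sgn SATV.center {SATV.center} = 0 := by
  have eW : (Finset.univ.filter fun j : Fin m =>
      Witness vars sgn ({SATV.center} : Finset (SATV n m)) j) = ∅ := by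
    rw [Finset.filter_eq_empty_iff]
    rintro j - ⟨β, -, hβ⟩
    simpa using (hβ 0).1
  have eX : (Finset.univ.filter fun i : Fin n =>
      SATV.lit i true ∈ ({SATV.center} : Finset (SATV n m)) ∧
      SATV.lit i false ∈ ({SATV.center} : Finset (SATV n m))) = ∅ := by
    rw [Finset.filter_eq_empty_iff]
    rintro i - ⟨h1, -⟩
    simp at h1
  have eC : (Finset.univ.filter fun j : Fin m =>
      SATV.clause j ∈ ({SATV.center} : Finset (SATV n m))) = ∅ := by
    rw [Finset.filter_eq_empty_iff]
    rintro j - h1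
    simp at h1
  simp [satUtil, eW, eX, eC]

lemma util_center_bigS (vars : Fin m → Fin 3 → Fin n) (sgn : Fin m → Fin 3 → Bool)
    (α : Fin n → Bool) (hsat : ∀ j : Fin m, ∃ p : Fin 3, α (vars j p) = sgn j p) :
    satUtil vars sgn SATV.center (bigS n m α) = 0 := by
  have eW : (Finset.univ.filter fun j : Fin m => Witness vars sgn (bigS n m α) j) =
      Finset.univ := by
    refine Finset.filter_true_of_mem fun j _ => ?_
    refine ⟨fun p => α (vars j p), hsat j, fun p => ⟨(lit_mem_bigS α _ _).mpr rfl, ?_⟩⟩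
    rw [lit_mem_bigS]
    exact Bool.not_ne_self _
  have eX : (Finset.univ.filter fun i : Fin n =>
      SATV.lit i true ∈ bigS n m α ∧ SATV.lit i false ∈ bigS n m α) = ∅ := by
    rw [Finset.filter_eq_empty_iff]
    rintro i -
    rw [lit_mem_bigS, lit_mem_bigS]
    rintro ⟨ht, hf⟩
    rw [← ht] at hf
    exact Bool.false_ne_true hf
  have eC : (Finset.univ.filter fun j : Fin m => SATV.clause j ∈ bigS n m α) =
      Finset.univ := Finset.filter_true_of_mem fun j _ => clause_mem_bigS α j
  simp only [satUtil, eW, eX, eC, Finset.card_empty, Nat.cast_zero, Finset.card_univ,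
    Fintype.card_fin]
  omega

end Aux

theorem stmt_10 (n m : ℕ) (vars : Fin m → Fin 3 → Fin n) (sgn : Fin m → Fin 3 → Bool)
    (hinj : ∀ j : Fin m, Function.Injective (vars j)) :
    (∃ π : ASHGPart (SATV n m), HGNashStable (satUtil vars sgn) π ∧
      ∀ x : SATV n m, ((starG n m).induce (↑(π.part x) : Set (SATV n m))).Connected) ↔
    (∃ α : Fin n → Bool, ∀ j : Fin m, ∃ p : Fin 3, α (vars j p) = sgn j p) := by
  constructor
  · -- stable partition implies satisfiable
    rintro ⟨π, hst, -⟩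
    have hclause : ∀ j : Fin m, SATV.clause j ∈ π.part SATV.center := by
      intro j
      by_contra hj
      have hne : π.part SATV.center ≠ π.part (SATV.clause j) := by
        intro h
        exact hj (by rw [h]; exact π.mem_part _)
      have h2 := (hst (SATV.clause j)).2 SATV.center hne
      have hc1 : SATV.center ∈ insert (SATV.clause j) (π.part SATV.center) :=
        Finset.mem_insert_of_mem (π.mem_part _)
      have hc2 : SATV.center ∉ π.part (SATV.clause j) := by
        intro h
        exact hne (π.eq_of_mem _ _ h)
      simp [satUtil, hc1, hc2] at h2
    have h0 := (hst SATV.center).1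
    rw [util_center_singleton] at h0
    have hC : (Finset.univ.filter fun j : Fin m =>
        SATV.clause j ∈ π.part SATV.center) = Finset.univ :=
      Finset.filter_true_of_mem fun j _ => hclause j
    have hle : (Finset.univ.filter fun j : Fin m =>
        Witness vars sgn (π.part SATV.center) j).card ≤ m := by
      simpa using Finset.card_filter_le Finset.univ
        (fun j : Fin m => Witness vars sgn (π.part SATV.center) j)
    have hge : m ≤ (Finset.univ.filter fun j : Fin m =>
        Witness vars sgn (π.part SATV.center) j).card := by
      simp only [satUtil, hC, Finset.card_univ, Fintype.card_fin] at h0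
      have h1 : (0:ℤ) ≤ ((Finset.univ.filter fun i : Fin n =>
          SATV.lit i true ∈ π.part SATV.center ∧
          SATV.lit i false ∈ π.part SATV.center).card : ℤ) := Nat.cast_nonneg _
      omega
    have hWuniv : (Finset.univ.filter fun j : Fin m =>
        Witness vars sgn (π.part SATV.center) j) = Finset.univ := by
      apply Finset.eq_univ_of_card
      rw [Fintype.card_fin]
      omega
    have hW : ∀ j : Fin m, Witness vars sgn (π.part SATV.center) j := by
      intro j
      have : j ∈ (Finset.univ.filter fun j : Fin m =>
          Witness vars sgn (π.part SATV.center) j) := by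
        rw [hWuniv]; exact Finset.mem_univ j
      exact (Finset.mem_filter.mp this).2
    refine ⟨fun i => decide (SATV.lit i true ∈ π.part SATV.center), fun j => ?_⟩
    obtain ⟨β, ⟨p, hp⟩, hβ⟩ := hW j
    refine ⟨p, ?_⟩
    rw [← hp]
    have h1 := (hβ p).1
    have h2 := (hβ p).2
    cases hb : β p with
    | true =>
        rw [hb] at h1
        simp [h1]
    | false =>
        rw [hb] at h2
        simp only [Bool.not_false] at h2
        simp [h2]
  · -- satisfiable implies stable partition
    rintro ⟨α, hsat⟩
    have key := util_center_bigS vars sgn α hsat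
    have hpc : (satPart n m α).part SATV.center = bigS n m α :=
      if_pos (center_mem_bigS α)
    refine ⟨satPart n m α, ?_, ?_⟩
    · intro v
      cases v with
      | lit i b => exact ⟨le_refl _, fun x _ => le_refl _⟩
      | center =>
          constructor
          · rw [hpc, key, util_center_singleton]
          · intro x hx
            rw [hpc] at hx ⊢
            rw [key]
            have hxS : x ∉ bigS n m α := by
              intro h
              exact hx (if_pos h)
            obtain ⟨i, b, rfl⟩ := notS_lit α hxS
            have hpx : (satPart n m α).part (SATV.lit i b) = {SATV.lit i b} :=
              if_neg hxS
            rw [hpx]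
            apply util_center_le_zero
            intro j
            apply no_witness_of_few_lits vars sgn hinj _ i b _ j
            intro i' b' h
            simp only [Finset.mem_insert, Finset.mem_singleton, SATV.lit.injEq,
              reduceCtorEq, false_or] at h
            exact h.1
      | clause j =>
          have hpj : (satPart n m α).part (SATV.clause j) = bigS n m α :=
            if_pos (clause_mem_bigS α j)
          constructor
          · rw [hpj]
            simp [satUtil, center_mem_bigS α]
          · intro x hx
            rw [hpj] at hx ⊢
            have hxS : x ∉ bigS n m α := by
              intro h
              exact hx (if_pos h)
            obtain ⟨i, b, rfl⟩ := notS_lit α hxS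
            have hpx : (satPart n m α).part (SATV.lit i b) = {SATV.lit i b} :=
              if_neg hxS
            rw [hpx]
            simp [satUtil, center_mem_bigS α]
    · intro x
      have : (satPart n m α).part x = if x ∈ bigS n m α then bigS n m α else {x} := rfl
      rw [this]
      by_cases h : x ∈ bigS n m α
      · rw [if_pos h]
        exact conn_of_center_mem _ (center_mem_bigS α)
      · rw [if_neg h]
        exact conn_singleton _
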